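/- arXiv:1211.1516 — 7 statements merged into one kernel-verified Lean document; each statement's English description precedes it below -/
import Mathlib

section
/- Let λ₁ : ℝ → ℂ be differentiable, and define ν₁, ν₂ : ℝ → ℂ by ν₁(−ω) = λ₁(ω) and ν₂(−ω) = −3·λ₁(ω) − ω·λ₁′(ω) for all ω ∈ ℝ. Then for every differentiable function ψ : ℝ → ℂ and every ω ∈ ℝ, the identity (λ₁(ω) + ν₁(−ω) + ν₂(−ω))·ψ(ω) − ω·λ₁(ω)·ψ′(ω) + d/dω( ω·ν₁(−ω)·ψ(ω) ) = 0 holds. -/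
/-- If `ν₁(−ω) = lam₁(ω)` and `ν₂(−ω) = −3 lam₁(ω) − ω lam₁'(ω)`, then the Fourier-space
identity expressing the vanishing of the first-order term of `L̃_a* ∘ L_a` holds
for every differentiable `ψ`. -/
theorem firstOrder_identity_of_conditions (lam₁ ν₁ ν₂ : ℝ → ℂ)
    (hlam₁ : Differentiable ℝ lam₁)
    (hν₁ : ∀ ω : ℝ, ν₁ (-ω) = lam₁ ω)
    (hν₂ : ∀ ω : ℝ, ν₂ (-ω) = -3 * lam₁ ω - (ω : ℂ) * deriv lam₁ ω) :
    ∀ ψ : ℝ → ℂ, Differentiable ℝ ψ → ∀ ω : ℝ,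
      (lam₁ ω + ν₁ (-ω) + ν₂ (-ω)) * ψ ω - (ω : ℂ) * lam₁ ω * deriv ψ ω
        + deriv (fun x : ℝ => (x : ℂ) * ν₁ (-x) * ψ x) ω = 0 := by
  intro ψ hψ ω
  have hfun : (fun x : ℝ => (x : ℂ) * ν₁ (-x) * ψ x)
      = fun x : ℝ => (x : ℂ) * lam₁ x * ψ x := by
    funext x; rw [hν₁ x]
  have hx : HasDerivAt (fun x : ℝ => ((x : ℂ) * lam₁ x) * ψ x)
      ((lam₁ ω + (ω : ℂ) * deriv lam₁ ω) * ψ ω + (ω : ℂ) * lam₁ ω * deriv ψ ω) ω := by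
    have h1 : HasDerivAt (fun x : ℝ => (x : ℂ)) 1 ω :=
      Complex.ofRealCLM.hasDerivAt
    have h2 : HasDerivAt (fun x : ℝ => (x : ℂ) * lam₁ x)
        (1 * lam₁ ω + (ω : ℂ) * deriv lam₁ ω) ω :=
      h1.mul (hlam₁ ω).hasDerivAt
    have := h2.mul (hψ ω).hasDerivAt
    exact this.congr_deriv (by ring)
  rw [hfun, hx.deriv, hν₁, hν₂]
  ring
end

section
/- Let τ₀ > 0 and γ ∈ (1, 2], and define λ₁ : ℝ∖{0} → ℂ by λ₁(ω) = −(1 + (−i·τ₀·ω)^{γ−1})^{−1/2}, using principal branch complex powers. Then λ₁ is differentiable on ℝ∖{0} and for every ω ≠ 0, −3·λ₁(ω) − ω·λ₁′(ω) = ((7−γ)/2)·(1 + (−i·τ₀·ω)^{γ−1})^{−1/2} + ((γ−1)/2)·(1 + (−i·τ₀·ω)^{γ−1})^{−3/2}. Consequently the function ν₂ defined by ν₂(−ω) = −3·λ₁(ω) − ω·λ₁′(ω) is given by ν₂(ω) = ((7−γ)/2)·(1 + (i·τ₀·ω)^{γ−1})^{−1/2} + ((γ−1)/2)·(1 + (i·τ₀·ω)^{γ−1})^{−3/2}.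 -/
open Complex

/-- Auxiliary: the base is nonzero. -/
lemma KSB_w_ne (τ₀ : ℝ) (hτ₀ : 0 < τ₀) (ω : ℝ) (hω : ω ≠ 0) :
    (-(Complex.I * (τ₀ : ℂ) * (ω : ℂ))) ≠ 0 := by
  apply neg_ne_zero.mpr
  exact mul_ne_zero (mul_ne_zero Complex.I_ne_zero (by exact_mod_cast hτ₀.ne'))
    (by exact_mod_cast hω)

/-- Auxiliary: real part of `1 + (−i τ₀ ω)^{γ−1}` is positive. -/
lemma KSB_re_pos (τ₀ γ : ℝ) (hτ₀ : 0 < τ₀) (hγ1 : 1 < γ) (hγ2 : γ ≤ 2)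
    (ω : ℝ) (hω : ω ≠ 0) :
    0 < ((1 : ℂ) + (-(Complex.I * (τ₀ : ℂ) * (ω : ℂ))) ^ ((γ : ℂ) - 1)).re := by
  set w : ℂ := -(Complex.I * (τ₀ : ℂ) * (ω : ℂ)) with hw
  have hw0 : w ≠ 0 := KSB_w_ne τ₀ hτ₀ ω hω
  have harg : w.arg = Real.pi / 2 ∨ w.arg = -(Real.pi / 2) := by
    rcases lt_or_gt_of_ne hω with h | h
    · left
      have hr : (0:ℝ) < τ₀ * (-ω) := mul_pos hτ₀ (by linarith)
      have : w = ((τ₀ * (-ω) : ℝ) : ℂ) * Complex.I := by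
        rw [hw]; push_cast; ring
      rw [this, Complex.arg_real_mul _ hr, Complex.arg_I]
    · right
      have hr : (0:ℝ) < τ₀ * ω := mul_pos hτ₀ h
      have : w = ((τ₀ * ω : ℝ) : ℂ) * (-Complex.I) := by
        rw [hw]; push_cast; ring
      rw [this, Complex.arg_real_mul _ hr, Complex.arg_neg_I]
  have hrez : 0 ≤ (w ^ ((γ : ℂ) - 1)).re := by
    rw [Complex.cpow_def_of_ne_zero hw0, Complex.exp_re]
    apply mul_nonneg (Real.exp_nonneg _)
    have him : (Complex.log w * ((γ : ℂ) - 1)).im = (γ - 1) * w.arg := by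
      simp [Complex.mul_im, Complex.log_im]; ring
    rw [him]
    apply Real.cos_nonneg_of_mem_Icc
    have hpi : (0:ℝ) < Real.pi := Real.pi_pos
    rcases harg with h | h <;> rw [h] <;> constructor <;> nlinarith
  simp only [Complex.add_re, Complex.one_re]
  linarith

/-- For the KSB model, `lam₁(ω) = −(1 + (−i τ₀ ω)^{γ−1})^{−1/2}` is differentiable on
`ℝ \ {0}`, the combination `−3lam₁(ω) − ω lam₁'(ω)` has the stated closed form, and
consequently `ν₂(ω)` is given by the stated expression. -/
theorem KSB_nu2 (τ₀ γ : ℝ) (hτ₀ : 0 < τ₀) (hγ : γ ∈ Set.Ioc (1 : ℝ) 2)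
    (lam₁ ν₂ : ℝ → ℂ)
    (hlam₁ : ∀ ω : ℝ, ω ≠ 0 →
      lam₁ ω = -(1 + (-(Complex.I * (τ₀ : ℂ) * (ω : ℂ))) ^ ((γ : ℂ) - 1)) ^ (-(1/2) : ℂ))
    (hν₂ : ∀ ω : ℝ, ω ≠ 0 → ν₂ (-ω) = -3 * lam₁ ω - (ω : ℂ) * deriv lam₁ ω) :
    ∀ ω : ℝ, ω ≠ 0 →
      DifferentiableAt ℝ lam₁ ω ∧
      (-3 * lam₁ ω - (ω : ℂ) * deriv lam₁ ω
        = (((7 - γ) / 2 : ℝ) : ℂ) *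
            (1 + (-(Complex.I * (τ₀ : ℂ) * (ω : ℂ))) ^ ((γ : ℂ) - 1)) ^ (-(1/2) : ℂ)
          + (((γ - 1) / 2 : ℝ) : ℂ) *
            (1 + (-(Complex.I * (τ₀ : ℂ) * (ω : ℂ))) ^ ((γ : ℂ) - 1)) ^ (-(3/2) : ℂ)) ∧
      ν₂ ω = (((7 - γ) / 2 : ℝ) : ℂ) *
            (1 + (Complex.I * (τ₀ : ℂ) * (ω : ℂ)) ^ ((γ : ℂ) - 1)) ^ (-(1/2) : ℂ)
          + (((γ - 1) / 2 : ℝ) : ℂ) *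
            (1 + (Complex.I * (τ₀ : ℂ) * (ω : ℂ)) ^ ((γ : ℂ) - 1)) ^ (-(3/2) : ℂ) := by
  obtain ⟨hγ1, hγ2⟩ := hγ
  have key : ∀ ω : ℝ, ω ≠ 0 →
      DifferentiableAt ℝ lam₁ ω ∧
      (-3 * lam₁ ω - (ω : ℂ) * deriv lam₁ ω
        = (((7 - γ) / 2 : ℝ) : ℂ) *
            (1 + (-(Complex.I * (τ₀ : ℂ) * (ω : ℂ))) ^ ((γ : ℂ) - 1)) ^ (-(1/2) : ℂ)
          + (((γ - 1) / 2 : ℝ) : ℂ) *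
            (1 + (-(Complex.I * (τ₀ : ℂ) * (ω : ℂ))) ^ ((γ : ℂ) - 1)) ^ (-(3/2) : ℂ)) := by
    intro ω hω
    set c : ℂ := (γ : ℂ) - 1 with hc
    set w : ℂ := -(Complex.I * (τ₀ : ℂ) * (ω : ℂ)) with hw
    have hw0 : w ≠ 0 := KSB_w_ne τ₀ hτ₀ ω hω
    have hre : 0 < ((1 : ℂ) + w ^ c).re := KSB_re_pos τ₀ γ hτ₀ hγ1 hγ2 ω hω
    have h1z0 : (1 : ℂ) + w ^ c ≠ 0 := by
      intro h; rw [h] at hre; simp at hre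
    -- the holomorphic model function
    have hwim : w.im ≠ 0 := by
      have : w.im = -(τ₀ * ω) := by rw [hw]; simp
      rw [this]
      exact neg_ne_zero.mpr (mul_ne_zero hτ₀.ne' hω)
    have hslit1 : w ∈ Complex.slitPlane := Or.inr hwim
    have hslit2 : (1 : ℂ) + w ^ c ∈ Complex.slitPlane := Or.inl hre
    have hwd : HasDerivAt (fun z : ℂ => -(Complex.I * (τ₀ : ℂ) * z))
        (-(Complex.I * (τ₀ : ℂ))) (ω : ℂ) := by
      exact ((hasDerivAt_id (ω : ℂ)).const_mul (Complex.I * (τ₀ : ℂ))).neg.congr_deriv (by simp)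
    have hzd : HasDerivAt (fun z : ℂ => (-(Complex.I * (τ₀ : ℂ) * z)) ^ c)
        (c * w ^ (c - 1) * (-(Complex.I * (τ₀ : ℂ)))) (ω : ℂ) :=
      hwd.cpow_const hslit1
    have hFd : HasDerivAt
        (fun z : ℂ => -((1 + (-(Complex.I * (τ₀ : ℂ) * z)) ^ c) ^ (-(1/2) : ℂ)))
        (-((-(1/2) : ℂ) * ((1 : ℂ) + w ^ c) ^ ((-(1/2) : ℂ) - 1) *
          (c * w ^ (c - 1) * (-(Complex.I * (τ₀ : ℂ)))))) (ω : ℂ) :=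
      ((hzd.const_add 1).cpow_const hslit2).neg
    have hfd : HasDerivAt
        (fun x : ℝ => -((1 + (-(Complex.I * (τ₀ : ℂ) * (x : ℂ))) ^ c) ^ (-(1/2) : ℂ)))
        (-((-(1/2) : ℂ) * ((1 : ℂ) + w ^ c) ^ ((-(1/2) : ℂ) - 1) *
          (c * w ^ (c - 1) * (-(Complex.I * (τ₀ : ℂ)))))) ω :=
      hFd.comp_ofReal
    have heq : lam₁ =ᶠ[nhds ω]
        fun x : ℝ => -((1 + (-(Complex.I * (τ₀ : ℂ) * (x : ℂ))) ^ c) ^ (-(1/2) : ℂ)) := by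
      filter_upwards [eventually_ne_nhds hω] with x hx
      exact hlam₁ x hx
    have hdiff : DifferentiableAt ℝ lam₁ ω :=
      hfd.differentiableAt.congr_of_eventuallyEq heq
    have hderiv : deriv lam₁ ω =
        -((-(1/2) : ℂ) * ((1 : ℂ) + w ^ c) ^ ((-(1/2) : ℂ) - 1) *
          (c * w ^ (c - 1) * (-(Complex.I * (τ₀ : ℂ))))) := by
      rw [heq.deriv_eq, hfd.deriv]
    refine ⟨hdiff, ?_⟩
    rw [hlam₁ ω hω, hderiv]
    have e1 : ((-(1/2) : ℂ) - 1) = (-(3/2) : ℂ) := by norm_num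
    have e2 : w ^ (c - 1) = w ^ c / w := by
      rw [Complex.cpow_sub _ _ hw0, Complex.cpow_one]
    have e3 : ((1 : ℂ) + w ^ c) ^ (-(3/2) : ℂ) * ((1 : ℂ) + w ^ c)
        = ((1 : ℂ) + w ^ c) ^ (-(1/2) : ℂ) := by
      rw [show ((-(3/2) : ℂ)) = (-(1/2) : ℂ) - 1 by norm_num,
        Complex.cpow_sub _ _ h1z0, Complex.cpow_one]
      field_simp
    rw [e1, e2]
    have hωC : (ω : ℂ) ≠ 0 := by exact_mod_cast hω
    set A := ((1 : ℂ) + w ^ c) ^ (-(1/2) : ℂ)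
    set B := ((1 : ℂ) + w ^ c) ^ (-(3/2) : ℂ)
    set z := w ^ c
    -- clear denominators and use e3, hw
    push_cast
    field_simp
    rw [hc]
    linear_combination (((γ:ℂ) - 1) * Complex.I * (τ₀:ℂ) * (ω:ℂ)) * e3
  intro ω hω
  refine ⟨(key ω hω).1, (key ω hω).2, ?_⟩
  have hω' : (-ω : ℝ) ≠ 0 := neg_ne_zero.mpr hω
  have h2 := (key (-ω) hω').2
  have h1 := hν₂ (-ω) hω'
  rw [neg_neg] at h1
  rw [h1, h2]
  have hbase : (-(Complex.I * (τ₀ : ℂ) * ((-ω : ℝ) : ℂ))) = Complex.I * (τ₀ : ℂ) * (ω : ℂ) := by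
    push_cast; ring
  rw [hbase]
end

section
/- Let α₀ > 0, τ₀ > 0, γ ∈ (1, 2], and define κ̃(ω) = ω·(1 + α₀·(1 + (i·τ₀·ω)^{γ−1})^{−1/2}) for ω > 0, using principal branch complex powers. Then for every ω > 0, |Im κ̃(ω)| ≤ α₀·ω·sin((γ−1)π/4). -/
open Complex Real

set_option maxHeartbeats 800000 in
/-- For the KSB model, `|Im κ̃(ω)| ≤ α₀ ω sin((γ−1)π/4)` for all `ω > 0`, where
`κ̃(ω) = ω (1 + α₀ (1 + (i τ₀ ω)^{γ−1})^{−1/2})`. -/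
theorem KSB_im_kappa_bound (α₀ τ₀ γ : ℝ) (hα₀ : 0 < α₀) (hτ₀ : 0 < τ₀)
    (hγ : γ ∈ Set.Ioc (1 : ℝ) 2) :
    ∀ ω : ℝ, 0 < ω →
      |((ω : ℂ) * (1 + (α₀ : ℂ) *
          (1 + (Complex.I * (τ₀ : ℂ) * (ω : ℂ)) ^ ((γ : ℂ) - 1)) ^ (-(1/2) : ℂ))).im| ≤
        α₀ * ω * Real.sin ((γ - 1) * Real.pi / 4) := by
  intro ω hω
  obtain ⟨hγ1, hγ2⟩ := hγ
  set c : ℝ := γ - 1 with hc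
  have hc0 : 0 < c := by simp [hc]; linarith
  have hc1 : c ≤ 1 := by simp [hc]; linarith
  set t : ℝ := τ₀ * ω with ht
  have ht0 : 0 < t := mul_pos hτ₀ hω
  set φ : ℝ := c * π / 2 with hφ
  have hφ0 : 0 < φ := by positivity
  have hφle : φ ≤ π / 2 := by
    rw [hφ, div_le_div_iff_of_pos_right two_pos]
    nlinarith [Real.pi_pos]
  -- rewrite the base of the inner power
  have hbase : Complex.I * (τ₀ : ℂ) * (ω : ℂ) = (t : ℂ) * Complex.I := by
    rw [ht]; push_cast; ring
  have hbne : (t : ℂ) * Complex.I ≠ 0 := by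
    simp [Complex.ext_iff, ht0.ne']
  -- compute log of the base
  have harg : Complex.arg ((t : ℂ) * Complex.I) = π / 2 := by
    rw [Complex.arg_real_mul _ ht0, Complex.arg_I]
  have habs : ‖(t : ℂ) * Complex.I‖ = t := by
    simp [map_mul, abs_of_pos ht0]
  have hlog : Complex.log ((t : ℂ) * Complex.I) = (Real.log t : ℂ) + (π / 2 : ℝ) * Complex.I := by
    apply Complex.ext <;>
      simp [Complex.log_re, Complex.log_im, habs, harg]
  set R : ℝ := Real.exp (c * Real.log t) with hR
  have hR0 : 0 < R := Real.exp_pos _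
  -- compute the inner power z
  set z : ℂ := ((t : ℂ) * Complex.I) ^ ((γ : ℂ) - 1) with hz
  have hγc : (γ : ℂ) - 1 = (c : ℂ) := by rw [hc]; push_cast; ring
  have hare : (((Real.log t : ℂ) + (π / 2 : ℝ) * Complex.I) * (c : ℂ)).re = c * Real.log t := by
    simp [Complex.mul_re]
    ring
  have haim : (((Real.log t : ℂ) + (π / 2 : ℝ) * Complex.I) * (c : ℂ)).im = φ := by
    simp [Complex.mul_im, hφ]
    ring
  have hzr : z.re = R * Real.cos φ := by
    rw [hz, hγc, Complex.cpow_def_of_ne_zero hbne, hlog, Complex.exp_re, hare, haim, hR]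
  have hzi : z.im = R * Real.sin φ := by
    rw [hz, hγc, Complex.cpow_def_of_ne_zero hbne, hlog, Complex.exp_im, hare, haim, hR]
  set w : ℂ := 1 + z with hw
  have hwre : w.re = 1 + R * Real.cos φ := by simp [hw, hzr]
  have hwim : w.im = R * Real.sin φ := by simp [hw, hzi]
  have hcos : 0 ≤ Real.cos φ := Real.cos_nonneg_of_mem_Icc ⟨by linarith, hφle⟩
  have hsin : 0 ≤ Real.sin φ := Real.sin_nonneg_of_nonneg_of_le_pi hφ0.le
    (by linarith [Real.pi_pos])
  have hwre1 : (1 : ℝ) ≤ w.re := by rw [hwre]; nlinarith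
  have hwim0 : 0 ≤ w.im := by rw [hwim]; positivity
  have hwne : w ≠ 0 := by
    intro h; rw [h] at hwre1; simp at hwre1; linarith
  have hA1 : (1 : ℝ) ≤ ‖w‖ := le_trans hwre1 (Complex.re_le_norm w)
  have hA0 : 0 < ‖w‖ := lt_of_lt_of_le one_pos hA1
  -- |w| ≥ R
  have hAR : R ≤ ‖w‖ := by
    have h1 : R ^ 2 ≤ ‖w‖ ^ 2 := by
      rw [Complex.sq_norm, Complex.normSq_apply, hwre, hwim]
      nlinarith [Real.sin_sq_add_cos_sq φ]
    nlinarith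
  -- arg bound
  set θ : ℝ := Complex.arg w with hθ
  have hθ0 : 0 ≤ θ := Complex.arg_nonneg_iff.2 hwim0
  have hθpi : θ ≤ π := Complex.arg_le_pi w
  have hmem : w.im / ‖w‖ ∈ Set.Icc (-1 : ℝ) 1 := by
    constructor
    · exact le_trans (by norm_num) (div_nonneg hwim0 hA0.le)
    · rw [div_le_one hA0]
      exact (abs_le.1 (Complex.abs_im_le_norm w)).2
  have hθφ : θ ≤ φ := by
    rw [hθ, Complex.arg_of_re_nonneg (by linarith)]
    rw [Real.arcsin_le_iff_le_sin hmem ⟨by linarith, hφle⟩]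
    rw [hwim, div_le_iff₀ hA0]
    nlinarith
  -- compute imaginary part of u = w ^ (-1/2)
  set u : ℂ := w ^ (-(1/2) : ℂ) with hu
  have hlre : (Complex.log w * (-(1/2) : ℂ)).re = -(1/2) * Real.log ‖w‖ := by
    norm_num [Complex.mul_re, Complex.log_re, Complex.log_im]
    ring
  have hlim : (Complex.log w * (-(1/2) : ℂ)).im = -(1/2) * θ := by
    norm_num [Complex.mul_im, Complex.log_re, Complex.log_im, hθ]
    ring
  have huim : u.im = Real.exp (-(1/2) * Real.log ‖w‖) *
      Real.sin (-(1/2) * θ) := by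
    rw [hu, Complex.cpow_def_of_ne_zero hwne, Complex.exp_im, hlre, hlim]
  have hexple : Real.exp (-(1/2) * Real.log ‖w‖) ≤ 1 := by
    rw [Real.exp_le_one_iff]
    nlinarith [Real.log_nonneg hA1]
  have hexp0 : 0 < Real.exp (-(1/2) * Real.log ‖w‖) := Real.exp_pos _
  have hsinθ : 0 ≤ Real.sin (θ / 2) := by
    apply Real.sin_nonneg_of_nonneg_of_le_pi (by linarith)
    linarith [Real.pi_pos]
  have huabs : |u.im| ≤ Real.sin (φ / 2) := by
    rw [huim]
    have hneg : Real.sin (-(1/2) * θ) = -Real.sin (θ / 2) := by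
      rw [show -(1/2) * θ = -(θ/2) by ring, Real.sin_neg]
    rw [hneg, abs_mul, abs_neg, _root_.abs_of_nonneg hsinθ, _root_.abs_of_pos hexp0]
    have h2 : Real.sin (θ / 2) ≤ Real.sin (φ / 2) := by
      apply Real.sin_le_sin_of_le_of_le_pi_div_two (by linarith [Real.pi_pos]) (by linarith)
      linarith
    nlinarith [Real.sin_le_one (φ / 2)]
  -- assemble
  have hexpr : ((ω : ℂ) * (1 + (α₀ : ℂ) *
      (1 + (Complex.I * (τ₀ : ℂ) * (ω : ℂ)) ^ ((γ : ℂ) - 1)) ^ (-(1/2) : ℂ))).im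
      = ω * (α₀ * u.im) := by
    rw [hbase]
    show ((ω : ℂ) * (1 + (α₀ : ℂ) * u)).im = ω * (α₀ * u.im)
    simp [Complex.mul_im, Complex.add_im, Complex.mul_re]
  rw [hexpr]
  have hφ4 : φ / 2 = (γ - 1) * π / 4 := by rw [hφ, hc]; ring
  rw [abs_mul, abs_mul, abs_of_pos hω, abs_of_pos hα₀, ← hφ4]
  calc ω * (α₀ * |u.im|) ≤ ω * (α₀ * Real.sin (φ / 2)) := by
        apply mul_le_mul_of_nonneg_left _ hω.le
        exact mul_le_mul_of_nonneg_left huabs hα₀.le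
    _ = α₀ * ω * Real.sin (φ / 2) := by ring
end

section
/- Let α₀ > 0, τ₀ > 0, γ ∈ (1, 2], and define κ̃(ω) = ω·(1 + α₀·(1 + (i·τ₀·ω)^{γ−1})^{−1/2}) for ω > 0, using principal branch complex powers. Then lim_{ω → +∞} |Im κ̃(ω)| / ω^{(3−γ)/2} = α₀·τ₀^{(1−γ)/2}·sin((γ−1)π/4). -/
open Filter Topology

/-- Pull a positive real factor out of a complex power with real exponent. -/
lemma ofReal_mul_cpow_real {s : ℝ} (hs : 0 < s) {w : ℂ} (hw : w ≠ 0) (p : ℝ) :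
    ((s : ℂ) * w) ^ (p : ℂ) = ((s ^ p : ℝ) : ℂ) * w ^ (p : ℂ) := by
  rw [Complex.cpow_def_of_ne_zero (mul_ne_zero (by exact_mod_cast hs.ne') hw),
      Complex.cpow_def_of_ne_zero hw, Complex.log_ofReal_mul hs hw, add_mul, Complex.exp_add,
      Real.rpow_def_of_pos hs, Complex.ofReal_exp]
  norm_cast


/-- For the KSB model, `|Im κ̃(ω)| / ω^{(3−γ)/2} → α₀ τ₀^{(1−γ)/2} sin((γ−1)π/4)`
as `ω → +∞`. -/
theorem KSB_im_kappa_asymptotics (α₀ τ₀ γ : ℝ) (hα₀ : 0 < α₀) (hτ₀ : 0 < τ₀)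
    (hγ : γ ∈ Set.Ioc (1 : ℝ) 2) :
    Tendsto (fun ω : ℝ =>
        |((ω : ℂ) * (1 + (α₀ : ℂ) *
            (1 + (Complex.I * (τ₀ : ℂ) * (ω : ℂ)) ^ ((γ : ℂ) - 1)) ^ (-(1/2) : ℂ))).im| /
          ω ^ ((3 - γ) / 2))
      atTop (𝓝 (α₀ * τ₀ ^ ((1 - γ) / 2) * Real.sin ((γ - 1) * Real.pi / 4))) := by
  obtain ⟨hγ1, hγ2⟩ := hγ
  have hπ := Real.pi_pos
  set θ : ℝ := (γ - 1) * Real.pi / 2 with hθdef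
  have hθ0 : 0 < θ := by
    have : 0 < (γ - 1) * Real.pi := mul_pos (by linarith) hπ
    rw [hθdef]; linarith
  have hθle : θ ≤ Real.pi / 2 := by
    rw [hθdef]; nlinarith
  set E : ℂ := Complex.exp ((θ : ℂ) * Complex.I) with hEdef
  have hEim : E.im = Real.sin θ := Complex.exp_ofReal_mul_I_im θ
  have hsinθ : 0 < Real.sin θ := Real.sin_pos_of_pos_of_lt_pi hθ0 (by linarith)
  -- r(ω) tends to infinity
  set r : ℝ → ℝ := fun ω => (τ₀ * ω) ^ (γ - 1) with hrdef
  have hr : Tendsto r atTop atTop :=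
    (tendsto_rpow_atTop (by linarith)).comp (tendsto_id.const_mul_atTop hτ₀)
  -- u(ω) = 1/r + E tends to E
  have hu : Tendsto (fun ω => (((r ω)⁻¹ : ℝ) : ℂ) + E) atTop (𝓝 E) := by
    have h0 : Tendsto (fun ω => ((r ω)⁻¹ : ℝ)) atTop (𝓝 0) := hr.inv_tendsto_atTop
    have := (Complex.continuous_ofReal.tendsto 0).comp h0
    simpa using this.add_const E
  -- continuity of cpow at E
  have hcont : ContinuousAt (fun z : ℂ => z ^ (-(1/2) : ℂ)) E :=
    continuousAt_cpow_const (Complex.mem_slitPlane_iff.mpr <| Or.inr (by rw [hEim]; exact hsinθ.ne'))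
  have hV : Tendsto (fun ω => ((((r ω)⁻¹ : ℝ) : ℂ) + E) ^ (-(1/2) : ℂ)) atTop
      (𝓝 (E ^ (-(1/2) : ℂ))) := hcont.tendsto.comp hu
  -- compute the limit value
  have hE : E ^ (-(1/2) : ℂ) = Complex.exp ((-(θ/2) : ℝ) * Complex.I) := by
    rw [hEdef, Complex.cpow_def_of_ne_zero (Complex.exp_ne_zero _),
        Complex.log_exp (by simpa using by linarith) (by simpa using by linarith)]
    congr 1
    push_cast
    ring
  have hlim : Tendsto (fun ω => α₀ * τ₀ ^ ((1 - γ) / 2) *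
      |(((((r ω)⁻¹ : ℝ) : ℂ) + E) ^ (-(1/2) : ℂ)).im|) atTop
      (𝓝 (α₀ * τ₀ ^ ((1 - γ) / 2) * Real.sin ((γ - 1) * Real.pi / 4))) := by
    have him : Tendsto (fun ω => |(((((r ω)⁻¹ : ℝ) : ℂ) + E) ^ (-(1/2) : ℂ)).im|) atTop
        (𝓝 |(E ^ (-(1/2) : ℂ)).im|) :=
      (continuous_abs.tendsto _).comp ((Complex.continuous_im.tendsto _).comp hV)
    have heval : |(E ^ (-(1/2) : ℂ)).im| = Real.sin ((γ - 1) * Real.pi / 4) := by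
      rw [hE, Complex.exp_ofReal_mul_I_im, Real.sin_neg, abs_neg]
      have : θ / 2 = (γ - 1) * Real.pi / 4 := by rw [hθdef]; ring
      rw [this, abs_of_nonneg]
      exact Real.sin_nonneg_of_nonneg_of_le_pi (by nlinarith) (by nlinarith)
    rw [← heval]
    exact him.const_mul _
  refine Tendsto.congr' ?_ hlim
  filter_upwards [eventually_gt_atTop 0] with ω hω
  -- algebraic identity for ω > 0
  have hτω : 0 < τ₀ * ω := by positivity
  have hrpos : 0 < r ω := Real.rpow_pos_of_pos hτω _
  have hune : (((r ω)⁻¹ : ℝ) : ℂ) + E ≠ 0 := by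
    intro h
    have := congrArg Complex.im h
    simp [hEim] at this
    exact hsinθ.ne' this
  -- step (i): (I τ₀ ω)^(γ-1) = r * E
  have hz : (Complex.I * (τ₀ : ℂ) * (ω : ℂ)) ^ ((γ : ℂ) - 1) = ((r ω : ℝ) : ℂ) * E := by
    have h1 : Complex.I * (τ₀ : ℂ) * (ω : ℂ) = ((τ₀ * ω : ℝ) : ℂ) * Complex.I := by
      push_cast; ring
    have h2 : ((γ : ℂ) - 1) = (((γ - 1 : ℝ)) : ℂ) := by push_cast; ring
    rw [h1, h2, ofReal_mul_cpow_real hτω Complex.I_ne_zero]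
    congr 1
    rw [Complex.cpow_def_of_ne_zero Complex.I_ne_zero, Complex.log_I, hEdef]
    congr 1
    push_cast
    rw [hθdef]
    push_cast
    ring
  -- step (ii)+(iii): (1 + r E)^(-1/2) = r^(-1/2) * (1/r + E)^(-1/2)
  have hsplit : (1 + ((r ω : ℝ) : ℂ) * E) ^ (-(1/2) : ℂ)
      = (((r ω) ^ (-(1/2) : ℝ) : ℝ) : ℂ) * ((((r ω)⁻¹ : ℝ) : ℂ) + E) ^ (-(1/2) : ℂ) := by
    have h3 : (1 + ((r ω : ℝ) : ℂ) * E) = ((r ω : ℝ) : ℂ) * ((((r ω)⁻¹ : ℝ) : ℂ) + E) := by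
      have : ((r ω : ℝ) : ℂ) ≠ 0 := by exact_mod_cast hrpos.ne'
      field_simp
      rw [Complex.ofReal_div, Complex.ofReal_one, mul_add, mul_one_div_cancel this]
    rw [h3]
    have h4 : (-(1/2) : ℂ) = (((-(1/2) : ℝ)) : ℂ) := by norm_num
    rw [h4, ofReal_mul_cpow_real hrpos hune]
  rw [hz, hsplit]
  -- now compute the imaginary part and simplify
  set V : ℂ := ((((r ω)⁻¹ : ℝ) : ℂ) + E) ^ (-(1/2) : ℂ) with hVdef
  have him : ((ω : ℂ) * (1 + (α₀ : ℂ) * ((((r ω) ^ (-(1/2) : ℝ) : ℝ) : ℂ) * V))).im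
      = ω * (α₀ * ((r ω) ^ (-(1/2) : ℝ) * V.im)) := by
    simp [Complex.mul_im, Complex.add_im, Complex.mul_re, Complex.ofReal_re,
      Complex.ofReal_im]
  rw [him]
  have hrneg : 0 < (r ω) ^ (-(1/2) : ℝ) := Real.rpow_pos_of_pos hrpos _
  rw [abs_mul, abs_mul, abs_mul, abs_of_pos hω, abs_of_pos hα₀, abs_of_pos hrneg]
  rw [eq_div_iff (by positivity : (ω : ℝ) ^ ((3 - γ) / 2) ≠ 0)]
  -- reduce to a real power identity
  have key : ω * (r ω) ^ (-(1/2) : ℝ) = τ₀ ^ ((1 - γ) / 2) * ω ^ ((3 - γ) / 2) := by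
    rw [hrdef]
    simp only
    rw [← Real.rpow_mul hτω.le, Real.mul_rpow hτ₀.le hω.le,
        show (γ - 1) * (-(1/2)) = (1 - γ) / 2 by ring,
        show (3 - γ)/2 = 1 + (1 - γ)/2 by ring, Real.rpow_add hω, Real.rpow_one]
    ring
  rw [show ω * (α₀ * ((r ω) ^ (-(1/2) : ℝ) * |V.im|))
      = (ω * (r ω) ^ (-(1/2) : ℝ)) * (α₀ * |V.im|) by ring, key]
  ring
end

section
/- Let τ > τ̃ > 0 and define κ̃(ω) = ω·((1 + i·ω·τ̃)/(1 + i·ω·τ))^{1/2} for ω > 0 (principal branch square root). Then lim_{ω → +∞} |Im κ̃(ω)| = (1/2)·√(τ̃/τ)·(1/τ̃ − 1/τ). -/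
open Filter Topology

private lemma NSW_aux_tendsto_z (τ τ' : ℝ) (hτ : τ' < τ) (hτ' : 0 < τ') :
    Tendsto (fun ω : ℝ => ((1 + Complex.I * (ω : ℂ) * (τ' : ℂ)) /
            (1 + Complex.I * (ω : ℂ) * (τ : ℂ)))) atTop (𝓝 ((τ' / τ : ℝ) : ℂ)) := by
  have hτ0 : 0 < τ := hτ'.trans hτ
  have hinv : Tendsto (fun ω : ℝ => ((ω : ℂ))⁻¹) atTop (𝓝 0) := by
    have h := (Complex.continuous_ofReal.tendsto 0).comp tendsto_inv_atTop_zero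
    simpa [Function.comp_def, Complex.ofReal_inv] using h
  have hden : Tendsto (fun ω : ℝ => ((ω:ℂ))⁻¹ + Complex.I * τ) atTop (𝓝 (Complex.I * τ)) := by
    simpa using hinv.add tendsto_const_nhds
  have hnum : Tendsto (fun ω : ℝ => ((ω:ℂ))⁻¹ + Complex.I * τ') atTop (𝓝 (Complex.I * τ')) := by
    simpa using hinv.add tendsto_const_nhds
  have hne : (Complex.I * τ : ℂ) ≠ 0 := by
    simp [Complex.ext_iff, hτ0.ne']
  have hg := hnum.div hden hne
  have heq : (Complex.I * τ') / (Complex.I * τ) = ((τ' / τ : ℝ) : ℂ) := by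
    rw [mul_div_mul_left _ _ Complex.I_ne_zero]; push_cast; ring
  rw [← heq]
  refine hg.congr' ?_
  filter_upwards [eventually_gt_atTop 0] with ω hω
  have hωC : (ω : ℂ) ≠ 0 := by exact_mod_cast hω.ne'
  have hd1 : ((ω:ℂ)⁻¹ + Complex.I * τ) ≠ 0 := by
    intro h
    have := congrArg Complex.im h
    simp [Complex.inv_im, Complex.ofReal_im] at this
    exact hτ0.ne' this
  have hd2 : (1 + Complex.I * (ω:ℂ) * τ : ℂ) ≠ 0 := by
    intro h
    have := congrArg Complex.re h
    simp at this
  simp only [Pi.div_apply]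
  rw [div_eq_div_iff hd1 hd2]
  field_simp

/-- For the NSW model with one relaxation process,
`|Im κ̃(ω)| → (1/2) √(τ'/τ) (1/τ' − 1/τ)` as `ω → +∞`, where
`κ̃(ω) = ω √((1 + iωτ')/(1 + iωτ))`. -/
theorem NSW_im_kappa_high_freq (τ τ' : ℝ) (hτ : τ' < τ) (hτ' : 0 < τ') :
    Tendsto (fun ω : ℝ =>
        |((ω : ℂ) * (((1 + Complex.I * (ω : ℂ) * (τ' : ℂ)) /
            (1 + Complex.I * (ω : ℂ) * (τ : ℂ))) ^ ((1/2 : ℂ)))).im|)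
      atTop (𝓝 ((1/2) * Real.sqrt (τ' / τ) * (1 / τ' - 1 / τ))) := by
  have hτ0 : 0 < τ := hτ'.trans hτ
  set z : ℝ → ℂ := fun ω => (1 + Complex.I * (ω : ℂ) * (τ' : ℂ)) /
            (1 + Complex.I * (ω : ℂ) * (τ : ℂ)) with hzdef
  have hA : Tendsto z atTop (𝓝 ((τ' / τ : ℝ) : ℂ)) := NSW_aux_tendsto_z τ τ' hτ hτ'
  -- pointwise computations of re and im
  have hre : ∀ ω : ℝ, (z ω).re = (1 + ω^2*τ*τ') / (1 + ω^2*τ^2) := by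
    intro ω
    simp [hzdef, Complex.div_re, Complex.normSq_apply]
    ring
  have him : ∀ ω : ℝ, (z ω).im = (ω*(τ' - τ)) / (1 + ω^2*τ^2) := by
    intro ω
    simp [hzdef, Complex.div_im, Complex.normSq_apply]
    ring
  -- limits of the ingredients
  have h1 : Tendsto (fun ω : ℝ => ω * (z ω).im) atTop (𝓝 ((τ' - τ)/τ^2)) := by
    have hsq : Tendsto (fun ω : ℝ => ω^2) atTop atTop := tendsto_pow_atTop two_ne_zero
    have hinv2 : Tendsto (fun ω : ℝ => (ω^2)⁻¹) atTop (𝓝 0) := hsq.inv_tendsto_atTop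
    have hden : Tendsto (fun ω : ℝ => (ω^2)⁻¹ + τ^2) atTop (𝓝 (0 + τ^2)) :=
      hinv2.add tendsto_const_nhds
    have hne : (0:ℝ) + τ^2 ≠ 0 := by positivity
    have := (tendsto_const_nhds (x := τ' - τ) (f := atTop (α := ℝ))).div hden hne
    have h0 : (τ' - τ) / (0 + τ^2) = (τ' - τ)/τ^2 := by ring_nf
    rw [h0] at this
    refine this.congr' ?_
    filter_upwards [eventually_gt_atTop 0] with ω hω
    have hω2 : (ω:ℝ) ≠ 0 := hω.ne'
    rw [him ω]
    simp only [Pi.div_apply]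
    field_simp
  have habs : Tendsto (fun ω : ℝ => ‖z ω‖) atTop (𝓝 (τ'/τ)) := by
    have := (continuous_norm.tendsto _).comp hA
    simpa [Function.comp_def, Complex.norm_real, Real.norm_eq_abs, abs_of_pos hτ', abs_of_pos hτ0] using this
  have hrelim : Tendsto (fun ω : ℝ => (z ω).re) atTop (𝓝 (τ'/τ)) := by
    have := (Complex.continuous_re.tendsto _).comp hA
    simpa [Function.comp_def] using this
  have hne2 : (τ'/τ + τ'/τ : ℝ) ≠ 0 := by positivity
  have hG : Tendsto (fun ω : ℝ =>
      (((ω * (z ω).im)^2 / (‖z ω‖ + (z ω).re)) / 2))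
      atTop (𝓝 ((((τ' - τ)/τ^2)^2 / (τ'/τ + τ'/τ)) / 2)) :=
    (((h1.pow 2).div (habs.add hrelim) hne2)).div_const 2
  have hsqrt := hG.sqrt
  -- value of the limit
  have hR : Real.sqrt (((((τ' - τ)/τ^2)^2 / (τ'/τ + τ'/τ)) / 2)) =
      (1/2) * Real.sqrt (τ' / τ) * (1 / τ' - 1 / τ) := by
    have hRnn : (0:ℝ) ≤ (1/2) * Real.sqrt (τ' / τ) * (1 / τ' - 1 / τ) := by
      have h2 : 1/τ - 1/τ ≤ 1/τ' - 1/τ := by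
        have := one_div_le_one_div_of_le hτ' hτ.le
        linarith
      have : (0:ℝ) ≤ 1/τ' - 1/τ := by simpa using h2
      positivity
    have hsq : ((1/2) * Real.sqrt (τ' / τ) * (1 / τ' - 1 / τ))^2 =
        ((((τ' - τ)/τ^2)^2 / (τ'/τ + τ'/τ)) / 2) := by
      have h2 : (Real.sqrt (τ' / τ))^2 = τ'/τ := Real.sq_sqrt (by positivity)
      have hstep : ((1/2) * Real.sqrt (τ' / τ) * (1 / τ' - 1 / τ))^2 =
          (1/4) * (τ'/τ) * (1 / τ' - 1 / τ)^2 := by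
        rw [mul_pow, mul_pow, h2]; ring
      rw [hstep]
      field_simp
      ring
    rw [← hsq, Real.sqrt_sq hRnn]
  rw [← hR]
  refine hsqrt.congr' ?_
  filter_upwards [eventually_gt_atTop 0] with ω hω
  -- pointwise identity
  have hrepos : 0 < (z ω).re := by
    rw [hre ω]; positivity
  have hpos : 0 < ‖z ω‖ + (z ω).re :=
    lt_of_lt_of_le hrepos (le_add_of_nonneg_left (norm_nonneg _))
  have hid : (‖z ω‖)^2 = (z ω).re^2 + (z ω).im^2 := by
    rw [Complex.sq_norm, Complex.normSq_apply]; ring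
  have hhalf : ((1:ℂ)/2) = (2⁻¹ : ℂ) := by norm_num
  have him2 : ((ω : ℂ) * ((z ω) ^ ((1/2 : ℂ)))).im = ω * ((z ω) ^ ((1/2 : ℂ))).im := by
    simp [Complex.mul_im]
  have hrhs : |((ω : ℂ) * ((z ω) ^ ((1/2 : ℂ)))).im| =
      ω * Real.sqrt ((‖z ω‖ - (z ω).re)/2) := by
    rw [him2, abs_mul, abs_of_pos hω, hhalf, Complex.abs_cpow_inv_two_im]
  rw [hrhs]
  have hAmR : ‖z ω‖ - (z ω).re = (z ω).im^2 / (‖z ω‖ + (z ω).re) := by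
    rw [eq_div_iff hpos.ne']
    nlinarith [hid]
  have hX : (ω * (z ω).im)^2 / (‖z ω‖ + (z ω).re) / 2 =
      ω^2 * ((‖z ω‖ - (z ω).re)/2) := by
    rw [hAmR]
    field_simp
  rw [hX, Real.sqrt_mul (sq_nonneg ω), Real.sqrt_sq hω.le]
end

section
/- Let N ∈ ℕ with N ≥ 1 and let τ_j > τ̃_j > 0 for j = 1, …, N. Define κ̃(ω) = ω·((1/N)·Σ_{j=1}^N (1 + i·ω·τ̃_j)/(1 + i·ω·τ_j))^{1/2} for ω > 0 (principal branch square root). Then lim_{ω → 0⁺} |Im κ̃(ω)| / ω² = (1/(2N))·Σ_{j=1}^N (τ_j − τ̃_j). -/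
open Filter Topology

/-- For the NSW model with `N` relaxation processes,
`|Im κ̃(ω)| / ω² → (1/(2N)) Σ_j (τ_j − τ'_j)` as `ω → 0⁺`, where
`κ̃(ω) = ω √((1/N) Σ_j (1 + iωτ'_j)/(1 + iωτ_j))`. -/
theorem NSW_N_im_kappa_low_freq (N : ℕ) (hN : 1 ≤ N) (τ τ' : Fin N → ℝ)
    (hτ : ∀ j, τ' j < τ j) (hτ' : ∀ j, 0 < τ' j) :
    Tendsto (fun ω : ℝ =>
        |((ω : ℂ) * ((((1 : ℂ) / (N : ℂ)) * ∑ j : Fin N,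
            (1 + Complex.I * (ω : ℂ) * (τ' j : ℂ)) /
              (1 + Complex.I * (ω : ℂ) * (τ j : ℂ))) ^ ((1/2 : ℂ)))).im| / ω ^ 2)
      (𝓝[>] (0 : ℝ)) (𝓝 ((1 / (2 * N)) * ∑ j : Fin N, (τ j - τ' j))) := by
  have hN0 : (N : ℂ) ≠ 0 := Nat.cast_ne_zero.mpr (by omega)
  have hNR : (0 : ℝ) < N := by exact_mod_cast Nat.pos_of_ne_zero (by omega)
  set S : ℝ → ℂ := fun ω => ((1 : ℂ) / (N : ℂ)) * ∑ j : Fin N,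
      (1 + Complex.I * (ω : ℂ) * (τ' j : ℂ)) / (1 + Complex.I * (ω : ℂ) * (τ j : ℂ)) with hSdef
  have hS0 : S 0 = 1 := by
    simp only [hSdef, Complex.ofReal_zero, mul_zero, zero_mul, add_zero]
    simp [div_self, hN0]
  set c0 : ℂ := ((1 : ℂ) / (N : ℂ)) * ∑ j : Fin N,
      (Complex.I * (τ' j : ℂ) - Complex.I * (τ j : ℂ)) with hc0
  -- derivative of S at 0
  have hid : HasDerivAt (fun ω : ℝ => (ω : ℂ)) 1 0 := by
    exact Complex.ofRealCLM.hasDerivAt (x := (0 : ℝ)) |>.congr_deriv (by simp)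
  have hterm : ∀ j : Fin N, HasDerivAt
      (fun ω : ℝ => (1 + Complex.I * (ω : ℂ) * (τ' j : ℂ)) /
        (1 + Complex.I * (ω : ℂ) * (τ j : ℂ)))
      (Complex.I * (τ' j : ℂ) - Complex.I * (τ j : ℂ)) 0 := by
    intro j
    have hnum : HasDerivAt (fun ω : ℝ => 1 + Complex.I * (ω : ℂ) * (τ' j : ℂ))
        (Complex.I * (τ' j : ℂ)) 0 := by
      simpa using (((hid.const_mul Complex.I).mul_const ((τ' j : ℂ))).const_add 1)
    have hden : HasDerivAt (fun ω : ℝ => 1 + Complex.I * (ω : ℂ) * (τ j : ℂ))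
        (Complex.I * (τ j : ℂ)) 0 := by
      simpa using (((hid.const_mul Complex.I).mul_const ((τ j : ℂ))).const_add 1)
    have hne : (1 : ℂ) + Complex.I * ((0 : ℝ) : ℂ) * (τ j : ℂ) ≠ 0 := by simp
    have := hnum.div hden hne
    convert this using 1
    · rfl
    · rfl
    · simp
  have hderivS : HasDerivAt S c0 0 := by
    have hsum := HasDerivAt.sum (fun j (_ : j ∈ Finset.univ) => hterm j)
    simpa [hSdef, hc0] using hsum.const_mul ((1 : ℂ) / (N : ℂ))
  -- derivative of S^(1/2) at 0
  have hslit : S 0 ∈ Complex.slitPlane := by rw [hS0]; exact Complex.one_mem_slitPlane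
  have hcpow : HasDerivAt (fun z : ℂ => z ^ ((1/2 : ℂ)))
      ((1/2 : ℂ) * (S 0) ^ ((1/2 : ℂ) - 1)) (S 0) :=
    (Complex.hasStrictDerivAt_cpow_const hslit).hasDerivAt
  have hcp' : HasDerivAt (fun ω : ℝ => S ω ^ ((1/2 : ℂ))) ((1/2 : ℂ) * c0) 0 := by
    have := hcpow.scomp (0 : ℝ) hderivS
    simp only [hS0, Complex.one_cpow, smul_eq_mul] at this ⊢
    convert this using 1
    · rfl
    · rfl
    · ring
  -- imaginary part
  have him : HasDerivAt (fun ω : ℝ => (S ω ^ ((1/2 : ℂ))).im) (((1/2 : ℂ) * c0).im) 0 := by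
    exact Complex.imCLM.hasFDerivAt.comp_hasDerivAt 0 hcp'
  have hval : ((1/2 : ℂ) * c0).im = (1 / (2 * N)) * ∑ j : Fin N, (τ' j - τ j) := by
    rw [hc0]
    have : ∑ j : Fin N, (Complex.I * (τ' j : ℂ) - Complex.I * (τ j : ℂ))
        = Complex.I * ((∑ j : Fin N, (τ' j - τ j) : ℝ) : ℂ) := by
      push_cast
      rw [Finset.mul_sum]
      exact Finset.sum_congr rfl fun j _ => by ring
    rw [this]
    simp [Complex.div_im, Complex.div_re]
    ring
  -- slope limit
  have hslope := hasDerivAt_iff_tendsto_slope.mp him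
  have h00 : (S 0 ^ ((1/2 : ℂ))).im = 0 := by rw [hS0, Complex.one_cpow]; simp
  have habs : Tendsto (fun ω : ℝ => |(S ω ^ ((1/2 : ℂ))).im / ω|) (𝓝[≠] (0 : ℝ))
      (𝓝 |((1/2 : ℂ) * c0).im|) := by
    have := hslope.abs
    refine this.congr fun ω => ?_
    simp only [slope, vsub_eq_sub, sub_zero, smul_eq_mul, h00]
    rw [mul_comm, ← div_eq_mul_inv]
  have hfinal : |((1/2 : ℂ) * c0).im| = (1 / (2 * N)) * ∑ j : Fin N, (τ j - τ' j) := by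
    rw [hval]
    have h1 : ∑ j : Fin N, (τ' j - τ j) = -∑ j : Fin N, (τ j - τ' j) := by
      rw [← Finset.sum_neg_distrib]; exact Finset.sum_congr rfl fun j _ => by ring
    have h2 : (0 : ℝ) ≤ ∑ j : Fin N, (τ j - τ' j) :=
      Finset.sum_nonneg fun j _ => by linarith [hτ j]
    rw [h1, abs_mul, abs_neg, abs_of_nonneg h2, abs_of_nonneg (by positivity)]
  rw [← hfinal]
  have hmono : 𝓝[>] (0 : ℝ) ≤ 𝓝[≠] (0 : ℝ) :=
    nhdsWithin_mono 0 fun x hx => ne_of_gt hx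
  refine (habs.mono_left hmono).congr' ?_
  filter_upwards [self_mem_nhdsWithin] with ω (hω : 0 < ω)
  have hmul : ((ω : ℂ) * (S ω ^ ((1/2 : ℂ)))).im = ω * (S ω ^ ((1/2 : ℂ))).im := by
    simp [Complex.mul_im]
  show |(S ω ^ ((1/2 : ℂ))).im / ω| = |((ω : ℂ) * (S ω ^ ((1/2 : ℂ)))).im| / ω ^ 2
  rw [hmul, abs_mul, abs_of_pos hω, abs_div, abs_of_pos hω, sq]
  field_simp
end

section
/- Let λ₁, λ₂ : ℝ → ℂ be twice differentiable, set μ₂(ω) := λ₁(ω)² − λ₂(ω), and define g₁, g₂ : ℝ → ℂ by g₁(ω) := −2·λ₁(ω) − ω·λ₁′(ω) and g₂(ω) := −λ₁(ω)² + λ₂(ω) − g₁(ω)·λ₁(ω) + d/dω[ ω·(−λ₁(ω)² + λ₂(ω) − g₁(ω)·λ₁(ω)) ] − (1/2)·d²/dω²[ (ω·λ₁(ω))² ]. Then for every twice differentiable ψ : ℝ → ℂ and every ω ∈ ℝ, the following identity holds: μ₂(ω)·ψ(ω) − ω·μ₂(ω)·ψ′(ω) + (1/2)·ω²·λ₁(ω)²·ψ″(ω)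 + g₂(ω)·ψ(ω) + d/dω[ ω·(g₁(ω)·λ₁(ω) − λ₂(ω))·ψ(ω) ] + (1/2)·d²/dω²[ ω²·λ₁(ω)²·ψ(ω) ] + g₁(ω)·λ₁(ω)·ψ(ω) − ω·g₁(ω)·λ₁(ω)·ψ′(ω) + d/dω[ ω·λ₁(ω)²·ψ(ω) ] − d/dω[ ω²·λ₁(ω)²·ψ′(ω) ] = 0. -/
/-- The Fourier-space identity expressing the vanishing of the second-order term
`f₂[φ] + g₂[φ] + g₁[f₁[φ]]` of the composed operator `L̃_a* ∘ L_a`, with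
`μ₂ = lam₁² − lam₂`, `g₁(ω) = −2lam₁(ω) − ωlam₁'(ω)` and `g₂` given by the second-order
condition. -/
theorem secondOrder_identity (lam₁ lam₂ ψ : ℝ → ℂ)
    (hlam₁ : Differentiable ℝ lam₁) (hlam₁' : Differentiable ℝ (deriv lam₁))
    (hlam₂ : Differentiable ℝ lam₂) (hlam₂' : Differentiable ℝ (deriv lam₂))
    (hψ : Differentiable ℝ ψ) (hψ' : Differentiable ℝ (deriv ψ))
    (μ₂ g₁ g₂ : ℝ → ℂ)
    (hμ₂ : ∀ ω : ℝ, μ₂ ω = lam₁ ω ^ 2 - lam₂ ω)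
    (hg₁ : ∀ ω : ℝ, g₁ ω = -2 * lam₁ ω - (ω : ℂ) * deriv lam₁ ω)
    (hg₂ : ∀ ω : ℝ, g₂ ω = -(lam₁ ω ^ 2) + lam₂ ω - g₁ ω * lam₁ ω
      + deriv (fun x : ℝ => (x : ℂ) * (-(lam₁ x ^ 2) + lam₂ x - g₁ x * lam₁ x)) ω
      - (1/2) * deriv (deriv (fun x : ℝ => ((x : ℂ) * lam₁ x) ^ 2)) ω) :
    ∀ ω : ℝ,
      μ₂ ω * ψ ω - (ω : ℂ) * μ₂ ω * deriv ψ ω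
        + (1/2) * (ω : ℂ) ^ 2 * lam₁ ω ^ 2 * deriv (deriv ψ) ω
        + g₂ ω * ψ ω
        + deriv (fun x : ℝ => (x : ℂ) * (g₁ x * lam₁ x - lam₂ x) * ψ x) ω
        + (1/2) * deriv (deriv (fun x : ℝ => (x : ℂ) ^ 2 * lam₁ x ^ 2 * ψ x)) ω
        + g₁ ω * lam₁ ω * ψ ω - (ω : ℂ) * g₁ ω * lam₁ ω * deriv ψ ω
        + deriv (fun x : ℝ => (x : ℂ) * lam₁ x ^ 2 * ψ x) ω
        - deriv (fun x : ℝ => (x : ℂ) ^ 2 * lam₁ x ^ 2 * deriv ψ x) ω = 0 := by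
  intro ω
  have HI : ∀ x : ℝ, HasDerivAt (fun y : ℝ => (y : ℂ)) 1 x := fun x => by
    simpa using (hasDerivAt_id x).ofReal_comp
  have HL : ∀ x : ℝ, HasDerivAt lam₁ (deriv lam₁ x) x := fun x => (hlam₁ x).hasDerivAt
  have HL' : ∀ x : ℝ, HasDerivAt (deriv lam₁) (deriv (deriv lam₁) x) x :=
    fun x => (hlam₁' x).hasDerivAt
  have HM : ∀ x : ℝ, HasDerivAt lam₂ (deriv lam₂ x) x := fun x => (hlam₂ x).hasDerivAt
  have Hp : ∀ x : ℝ, HasDerivAt ψ (deriv ψ x) x := fun x => (hψ x).hasDerivAt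
  have Hp' : ∀ x : ℝ, HasDerivAt (deriv ψ) (deriv (deriv ψ) x) x := fun x => (hψ' x).hasDerivAt
  have HL2 : ∀ x : ℝ, HasDerivAt (fun y : ℝ => lam₁ y ^ 2)
      (2 * lam₁ x * deriv lam₁ x) x := fun x => by
    have e : (fun y : ℝ => lam₁ y ^ 2) = fun y : ℝ => lam₁ y * lam₁ y :=
      funext fun y => pow_two _
    rw [e]; exact ((HL x).mul (HL x)).congr_deriv (by ring)
  have HI2 : ∀ x : ℝ, HasDerivAt (fun y : ℝ => (y : ℂ) ^ 2) (2 * (x : ℂ)) x := fun x => by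
    have e : (fun y : ℝ => (y : ℂ) ^ 2) = fun y : ℝ => (y : ℂ) * (y : ℂ) :=
      funext fun y => pow_two _
    rw [e]; exact ((HI x).mul (HI x)).congr_deriv (by ring)
  have HIL2 : ∀ x : ℝ, HasDerivAt (fun y : ℝ => ((y : ℂ) * lam₁ y) ^ 2)
      (2 * ((x : ℂ) * lam₁ x) * (lam₁ x + (x : ℂ) * deriv lam₁ x)) x := fun x => by
    have e : (fun y : ℝ => ((y : ℂ) * lam₁ y) ^ 2)
        = fun y : ℝ => ((y : ℂ) * lam₁ y) * ((y : ℂ) * lam₁ y) := funext fun y => pow_two _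
    rw [e]; exact (((HI x).mul (HL x)).mul ((HI x).mul (HL x))).congr_deriv (by simp only [Pi.mul_apply, Pi.pow_apply, Pi.neg_apply, Pi.add_apply, Pi.sub_apply]; ring)
  -- first derivatives, as functions, of the two doubly-differentiated expressions
  have h1 : deriv (fun x : ℝ => ((x : ℂ) * lam₁ x) ^ 2)
      = fun x : ℝ => 2 * ((x : ℂ) * lam₁ x) * (lam₁ x + (x : ℂ) * deriv lam₁ x) :=
    funext fun x => (HIL2 x).deriv
  have h2 : deriv (fun x : ℝ => (x : ℂ) ^ 2 * lam₁ x ^ 2 * ψ x)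
      = fun x : ℝ => 2 * (x : ℂ) * lam₁ x ^ 2 * ψ x
          + 2 * (x : ℂ) ^ 2 * lam₁ x * deriv lam₁ x * ψ x
          + (x : ℂ) ^ 2 * lam₁ x ^ 2 * deriv ψ x :=
    funext fun x => (((((HI2 x).mul (HL2 x)).mul (Hp x))).congr_deriv (by simp only [Pi.mul_apply, Pi.pow_apply, Pi.neg_apply, Pi.add_apply, Pi.sub_apply]; ring)).deriv
  -- remaining pointwise derivatives at ω
  have k1 : deriv (fun x : ℝ => 2 * ((x : ℂ) * lam₁ x) * (lam₁ x + (x : ℂ) * deriv lam₁ x)) ω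
      = 2 * lam₁ ω ^ 2 + 8 * (ω : ℂ) * lam₁ ω * deriv lam₁ ω
        + 2 * (ω : ℂ) ^ 2 * deriv lam₁ ω ^ 2 + 2 * (ω : ℂ) ^ 2 * lam₁ ω * deriv (deriv lam₁) ω :=
    (((((HI ω).mul (HL ω)).const_mul (2 : ℂ)).mul
      ((HL ω).add ((HI ω).mul (HL' ω)))).congr_deriv (by simp only [Pi.mul_apply, Pi.pow_apply, Pi.neg_apply, Pi.add_apply, Pi.sub_apply]; ring)).deriv
  have k2 : deriv (fun x : ℝ => 2 * (x : ℂ) * lam₁ x ^ 2 * ψ x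
          + 2 * (x : ℂ) ^ 2 * lam₁ x * deriv lam₁ x * ψ x
          + (x : ℂ) ^ 2 * lam₁ x ^ 2 * deriv ψ x) ω
      = 2 * lam₁ ω ^ 2 * ψ ω + 8 * (ω : ℂ) * lam₁ ω * deriv lam₁ ω * ψ ω
        + 4 * (ω : ℂ) * lam₁ ω ^ 2 * deriv ψ ω
        + 2 * (ω : ℂ) ^ 2 * deriv lam₁ ω ^ 2 * ψ ω
        + 2 * (ω : ℂ) ^ 2 * lam₁ ω * deriv (deriv lam₁) ω * ψ ω
        + 4 * (ω : ℂ) ^ 2 * lam₁ ω * deriv lam₁ ω * deriv ψ ω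
        + (ω : ℂ) ^ 2 * lam₁ ω ^ 2 * deriv (deriv ψ) ω :=
    ((((((HI ω).const_mul (2 : ℂ)).mul (HL2 ω)).mul (Hp ω)).add
        (((((HI2 ω).const_mul (2 : ℂ)).mul (HL ω)).mul (HL' ω)).mul (Hp ω)) |>.add
        (((HI2 ω).mul (HL2 ω)).mul (Hp' ω))).congr_deriv (by simp only [Pi.mul_apply, Pi.pow_apply, Pi.neg_apply, Pi.add_apply, Pi.sub_apply]; ring)).deriv
  have k3 : deriv (fun x : ℝ => (x : ℂ)
        * (-(lam₁ x ^ 2) + lam₂ x - (-2 * lam₁ x - (x : ℂ) * deriv lam₁ x) * lam₁ x)) ω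
      = lam₁ ω ^ 2 + lam₂ ω + 4 * (ω : ℂ) * lam₁ ω * deriv lam₁ ω + (ω : ℂ) * deriv lam₂ ω
        + (ω : ℂ) ^ 2 * deriv lam₁ ω ^ 2 + (ω : ℂ) ^ 2 * lam₁ ω * deriv (deriv lam₁) ω :=
    (((HI ω).mul ((((HL2 ω).neg).add (HM ω)).sub
        ((((HL ω).const_mul (-2 : ℂ)).sub ((HI ω).mul (HL' ω))).mul (HL ω)))).congr_deriv
      (by simp only [Pi.mul_apply, Pi.pow_apply, Pi.neg_apply, Pi.add_apply, Pi.sub_apply]; ring)).deriv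
  have k4 : deriv (fun x : ℝ => (x : ℂ)
        * ((-2 * lam₁ x - (x : ℂ) * deriv lam₁ x) * lam₁ x - lam₂ x) * ψ x) ω
      = -2 * lam₁ ω ^ 2 * ψ ω - 6 * (ω : ℂ) * lam₁ ω * deriv lam₁ ω * ψ ω - lam₂ ω * ψ ω
        - (ω : ℂ) * deriv lam₂ ω * ψ ω - (ω : ℂ) ^ 2 * deriv lam₁ ω ^ 2 * ψ ω
        - (ω : ℂ) ^ 2 * lam₁ ω * deriv (deriv lam₁) ω * ψ ω
        - 2 * (ω : ℂ) * lam₁ ω ^ 2 * deriv ψ ω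
        - (ω : ℂ) ^ 2 * lam₁ ω * deriv lam₁ ω * deriv ψ ω
        - (ω : ℂ) * lam₂ ω * deriv ψ ω :=
    ((((HI ω).mul (((((HL ω).const_mul (-2 : ℂ)).sub ((HI ω).mul (HL' ω))).mul (HL ω)).sub
        (HM ω))).mul (Hp ω)).congr_deriv (by simp only [Pi.mul_apply, Pi.pow_apply, Pi.neg_apply, Pi.add_apply, Pi.sub_apply]; ring)).deriv
  have k5 : deriv (fun x : ℝ => (x : ℂ) * lam₁ x ^ 2 * ψ x) ω
      = lam₁ ω ^ 2 * ψ ω + 2 * (ω : ℂ) * lam₁ ω * deriv lam₁ ω * ψ ω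
        + (ω : ℂ) * lam₁ ω ^ 2 * deriv ψ ω :=
    ((((HI ω).mul (HL2 ω)).mul (Hp ω)).congr_deriv (by simp only [Pi.mul_apply, Pi.pow_apply, Pi.neg_apply, Pi.add_apply, Pi.sub_apply]; ring)).deriv
  have k6 : deriv (fun x : ℝ => (x : ℂ) ^ 2 * lam₁ x ^ 2 * deriv ψ x) ω
      = 2 * (ω : ℂ) * lam₁ ω ^ 2 * deriv ψ ω
        + 2 * (ω : ℂ) ^ 2 * lam₁ ω * deriv lam₁ ω * deriv ψ ω
        + (ω : ℂ) ^ 2 * lam₁ ω ^ 2 * deriv (deriv ψ) ω :=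
    ((((HI2 ω).mul (HL2 ω)).mul (Hp' ω)).congr_deriv (by simp only [Pi.mul_apply, Pi.pow_apply, Pi.neg_apply, Pi.add_apply, Pi.sub_apply]; ring)).deriv
  simp only [hμ₂, hg₂, hg₁, h1, h2]
  rw [k1, k2, k3, k4, k5, k6]
  ring
end
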